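/- The integral ∫_0^4 log(1+x) / (π √(x(4−x))) dx = 2 log φ, where φ = (1+√5)/2 is the golden ratio. -/

import Mathlib

open Real MeasureTheory intervalIntegral Set

lemma hasSum_log_aux (r θ : ℝ) (hr : |r| < 1) :
    HasSum (fun n : ℕ ↦ -(r ^ n * Real.cos (n * θ) / n))
      (Real.log (1 - 2 * r * Real.cos θ + r ^ 2) / 2) := by
  set z : ℂ := r * Complex.exp (θ * Complex.I) with hz
  have hzn : ‖(-z : ℂ)‖ < 1 := by
    simp only [norm_neg, hz, norm_mul, Complex.norm_exp]
    simpa using hr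
  have H := Complex.hasSum_taylorSeries_log hzn
  have hfun : (fun n : ℕ ↦ (-1 : ℂ) ^ (n + 1) * (-z) ^ n / n) = fun n : ℕ ↦ -(z ^ n / n) := by
    funext n
    rw [neg_pow z n, show (-1:ℂ)^(n+1) * ((-1)^n * z^n) / n = ((-1)^(n+1)*(-1)^n) * z^n / n by ring,
      ← pow_add, Odd.neg_one_pow ⟨n, by ring⟩]
    ring
  rw [hfun] at H
  have Hre := Complex.hasSum_re H
  have habs : ‖1 + -z‖ ^ 2 = 1 - 2 * r * Real.cos θ + r ^ 2 := by
    rw [← Complex.normSq_eq_norm_sq, Complex.normSq_apply]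
    simp [hz, Complex.exp_mul_I, Complex.add_re, Complex.add_im, Complex.mul_re, Complex.mul_im,
      Complex.cos_ofReal_re, Complex.sin_ofReal_re]
    nlinarith [Real.sin_sq_add_cos_sq θ]
  have hlogre : (Complex.log (1 + -z)).re = Real.log (1 - 2 * r * Real.cos θ + r ^ 2) / 2 := by
    rw [Complex.log_re, ← habs, Real.log_pow]
    push_cast
    ring
  rw [hlogre] at Hre
  convert Hre using 2 with n
  have hzp : (z ^ n : ℂ) = (r : ℝ) ^ n * Complex.exp ((n * θ : ℝ) * Complex.I) := by
    rw [hz, mul_pow, ← Complex.exp_nat_mul]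
    push_cast
    ring_nf
  rw [hzp, ← Complex.ofReal_pow r n, Complex.exp_mul_I, ← Complex.ofReal_cos, ← Complex.ofReal_sin,
    ← Complex.ofReal_natCast n,
    show ((r ^ n : ℝ) : ℂ) * (↑(Real.cos (↑n * θ)) + ↑(Real.sin (↑n * θ)) * Complex.I)
        / ((n : ℝ) : ℂ)
      = ↑(r ^ n * Real.cos (↑n * θ) / n) + ↑(r ^ n * Real.sin (↑n * θ) / n) * Complex.I by
        push_cast; ring]
  simp only [Complex.neg_re, Complex.add_re, Complex.ofReal_re, Complex.mul_I_re,
    Complex.ofReal_im, neg_zero, add_zero]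

-- ∫_0^π cos (n θ) dθ = 0 for n ≥ 1
lemma integral_cos_nat (n : ℕ) (hn : n ≠ 0) :
    ∫ θ in (0:ℝ)..π, Real.cos (n * θ) = 0 := by
  have hc : (n : ℝ) ≠ 0 := Nat.cast_ne_zero.mpr hn
  rw [intervalIntegral.integral_comp_mul_left Real.cos hc]
  simp [integral_cos, Real.sin_nat_mul_pi]

lemma hasSum_log_aux' (r θ : ℝ) (hr : |r| < 1) :
    HasSum (fun n : ℕ ↦ 2 * -(r ^ n * Real.cos (n * θ) / n))
      (Real.log (1 - 2 * r * Real.cos θ + r ^ 2)) := by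
  have h := (hasSum_log_aux r θ hr).mul_left 2
  have h2 : 2 * (Real.log (1 - 2 * r * Real.cos θ + r ^ 2) / 2)
      = Real.log (1 - 2 * r * Real.cos θ + r ^ 2) := by ring
  exact h2 ▸ h

lemma integral_log_poisson {r : ℝ} (hr0 : 0 ≤ r) (hr : r < 1) :
    ∫ θ in (0:ℝ)..π, Real.log (1 - 2 * r * Real.cos θ + r ^ 2) = 0 := by
  have hra : |r| < 1 := by rwa [abs_of_nonneg hr0]
  set F : ℕ → ℝ → ℝ := fun n θ ↦ 2 * -(r ^ n * Real.cos (n * θ) / n) with hF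
  have hFcont : ∀ n, Continuous (F n) := by
    intro n
    fun_prop
  have hF_int : ∀ n, IntegrableOn (F n) (Set.Ioc 0 π) volume := fun n ↦
    ((hFcont n).integrableOn_Ioc)
  have hF_bound : ∀ n, (∫ θ in Set.Ioc (0:ℝ) π, ‖F n θ‖) ≤ (2 * π) * r ^ n := by
    intro n
    have h1 : ∀ θ ∈ Set.Ioc (0:ℝ) π, ‖F n θ‖ ≤ 2 * r ^ n := by
      intro θ _
      rcases Nat.eq_zero_or_pos n with rfl | hn
      · simp [hF]
      have h3 : (1:ℝ) ≤ (n:ℝ) := by exact_mod_cast hn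
      have hrn : (0:ℝ) ≤ r ^ n := pow_nonneg hr0 n
      have he : ‖F n θ‖ = 2 * (r ^ n * |Real.cos (n * θ)| / n) := by
        rw [hF]
        simp only [norm_mul, norm_neg, norm_div, Real.norm_eq_abs]
        rw [abs_of_nonneg hrn, abs_of_nonneg (by linarith : (0:ℝ) ≤ (n:ℝ)),
          abs_of_nonneg (by norm_num : (0:ℝ) ≤ 2)]
      rw [he]
      have hb : r ^ n * |Real.cos (n * θ)| / n ≤ r ^ n := by
        rw [div_le_iff₀ (by linarith)]
        nlinarith [Real.abs_cos_le_one (n * θ)]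
      linarith
    calc (∫ θ in Set.Ioc (0:ℝ) π, ‖F n θ‖)
        ≤ ∫ _ in Set.Ioc (0:ℝ) π, 2 * r ^ n := by
          refine setIntegral_mono_on (hF_int n).norm ((integrableOn_const_iff (C := 2 * r ^ n) enorm_ne_top).mpr ?_) measurableSet_Ioc h1
          right; simp [Real.volume_Ioc]
      _ = (2 * π) * r ^ n := by
          simp [Real.volume_Ioc, ENNReal.toReal_ofReal Real.pi_pos.le, max_eq_left Real.pi_pos.le]
          ring
  have hF_sum : Summable fun n ↦ ∫ θ in Set.Ioc (0:ℝ) π, ‖F n θ‖ :=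
    Summable.of_nonneg_of_le (fun n ↦ integral_nonneg fun θ ↦ norm_nonneg _)
      hF_bound (((summable_geometric_of_lt_one hr0 hr).mul_left (2*π)))
  have key := integral_tsum_of_summable_integral_norm (μ := volume.restrict (Set.Ioc 0 π))
      hF_int hF_sum
  have hzero : ∀ n, (∫ θ in Set.Ioc (0:ℝ) π, F n θ) = 0 := by
    intro n
    rcases Nat.eq_zero_or_pos n with rfl | hn
    · simp [hF]
    rw [← intervalIntegral.integral_of_le Real.pi_pos.le]
    rw [hF]
    simp only
    rw [intervalIntegral.integral_const_mul, intervalIntegral.integral_neg]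
    have : ∀ θ, r ^ n * Real.cos (n * θ) / n = (r ^ n / n) * Real.cos (n * θ) := by
      intro θ; ring
    simp_rw [this]
    rw [intervalIntegral.integral_const_mul, integral_cos_nat n hn.ne']
    ring
  have hts : (∑' n, ∫ θ in Set.Ioc (0:ℝ) π, F n θ) = 0 := by
    simp [hzero]
  rw [intervalIntegral.integral_of_le Real.pi_pos.le]
  have hpt : ∀ θ : ℝ, (∑' n, F n θ) = Real.log (1 - 2 * r * Real.cos θ + r ^ 2) :=
    fun θ ↦ (hasSum_log_aux' r θ hra).tsum_eq
  have hcg : (∫ θ in Set.Ioc (0:ℝ) π, Real.log (1 - 2 * r * Real.cos θ + r ^ 2))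
      = ∫ θ in Set.Ioc (0:ℝ) π, ∑' n, F n θ :=
    setIntegral_congr_fun measurableSet_Ioc fun θ _ ↦ (hpt θ).symm
  rw [hcg, ← key]
  exact hts

noncomputable def g4 : ℝ → ℝ := fun x ↦ Real.log (1 + x) / (π * Real.sqrt (x * (4 - x)))

lemma g4_integrable : IntegrableOn g4 (Set.Icc 0 4) := by
  rw [integrableOn_Icc_iff_integrableOn_Ioo]
  have hmeas : AEStronglyMeasurable g4 (volume.restrict (Set.Ioo (0:ℝ) 4)) := by
    apply Measurable.aestronglyMeasurable
    unfold g4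
    exact (Real.measurable_log.comp (measurable_const.add measurable_id)).div
      ((Real.continuous_sqrt.measurable.comp
        (measurable_id.mul (measurable_const.sub measurable_id))).const_mul π)
  have hsplit : Set.Ioo (0:ℝ) 4 = Set.Ioc 0 2 ∪ Set.Ioo 2 4 :=
    (Set.Ioc_union_Ioo_eq_Ioo (by norm_num) (by norm_num)).symm
  rw [hsplit]
  apply MeasureTheory.IntegrableOn.union
  · -- piece on Ioc 0 2, majorant (log 5/π) * x^(-1/2)
    have hmaj : IntegrableOn (fun x : ℝ ↦ Real.log 5 / π * x ^ (-(1/2) : ℝ))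
        (Set.Ioc (0:ℝ) 2) := by
      rw [← intervalIntegrable_iff_integrableOn_Ioc_of_le (by norm_num)]
      exact (intervalIntegral.intervalIntegrable_rpow' (by norm_num)).const_mul _
    refine Integrable.mono' hmaj (hmeas.mono_set (by rw [hsplit]; exact subset_union_left)) ?_
    refine (ae_restrict_iff' measurableSet_Ioc).mpr (Filter.Eventually.of_forall ?_)
    intro x hx
    have hx0 : 0 < x := hx.1
    have hx2 : x ≤ 2 := hx.2
    have hxx : x ≤ x * (4 - x) := by nlinarith
    have hs : Real.sqrt x ≤ Real.sqrt (x * (4 - x)) := Real.sqrt_le_sqrt hxx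
    have hs0 : 0 < Real.sqrt x := Real.sqrt_pos.mpr hx0
    have hlog0 : 0 ≤ Real.log (1 + x) := Real.log_nonneg (by linarith)
    have hlog5 : Real.log (1 + x) ≤ Real.log 5 := Real.log_le_log (by linarith) (by linarith)
    have hng : ‖g4 x‖ = Real.log (1 + x) / (π * Real.sqrt (x * (4 - x))) := by
      unfold g4
      rw [Real.norm_eq_abs, abs_of_nonneg (div_nonneg hlog0 (by positivity))]
    rw [hng, Real.rpow_neg hx0.le, ← Real.sqrt_eq_rpow]
    have key : Real.log (1 + x) / (π * Real.sqrt (x * (4 - x))) ≤ Real.log 5 / (π * Real.sqrt x) :=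
      div_le_div₀ (Real.log_nonneg (by norm_num)) hlog5 (by positivity)
        (by nlinarith [Real.pi_pos])
    have : Real.log 5 / (π * Real.sqrt x) = Real.log 5 / π * (Real.sqrt x)⁻¹ := by
      field_simp
    linarith
  · have hmaj : IntegrableOn (fun x : ℝ ↦ Real.log 5 / π * (4 - x) ^ (-(1/2) : ℝ))
        (Set.Ioo (2:ℝ) 4) := by
      rw [← intervalIntegrable_iff_integrableOn_Ioo_of_le (by norm_num)]
      have h1 : IntervalIntegrable (fun x : ℝ ↦ x ^ (-(1/2) : ℝ)) volume 0 2 :=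
        intervalIntegral.intervalIntegrable_rpow' (by norm_num)
      have h2 := h1.comp_sub_left 4
      norm_num at h2
      exact (h2.const_mul _).symm
    refine Integrable.mono' hmaj (hmeas.mono_set (by rw [hsplit]; exact subset_union_right)) ?_
    refine (ae_restrict_iff' measurableSet_Ioo).mpr (Filter.Eventually.of_forall ?_)
    intro x hx
    have hx2 : 2 < x := hx.1
    have hx4 : x < 4 := hx.2
    have hxx : 4 - x ≤ x * (4 - x) := by nlinarith
    have hs : Real.sqrt (4 - x) ≤ Real.sqrt (x * (4 - x)) := Real.sqrt_le_sqrt hxx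
    have hs0 : 0 < Real.sqrt (4 - x) := Real.sqrt_pos.mpr (by linarith)
    have hlog0 : 0 ≤ Real.log (1 + x) := Real.log_nonneg (by linarith)
    have hlog5 : Real.log (1 + x) ≤ Real.log 5 := Real.log_le_log (by linarith) (by linarith)
    have hng : ‖g4 x‖ = Real.log (1 + x) / (π * Real.sqrt (x * (4 - x))) := by
      unfold g4
      rw [Real.norm_eq_abs, abs_of_nonneg (div_nonneg hlog0 (by positivity))]
    rw [hng, Real.rpow_neg (by linarith : (0:ℝ) ≤ 4 - x), ← Real.sqrt_eq_rpow]
    have key : Real.log (1 + x) / (π * Real.sqrt (x * (4 - x)))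
        ≤ Real.log 5 / (π * Real.sqrt (4 - x)) :=
      div_le_div₀ (Real.log_nonneg (by norm_num)) hlog5 (by positivity)
        (by nlinarith [Real.pi_pos])
    have : Real.log 5 / (π * Real.sqrt (4 - x)) = Real.log 5 / π * (Real.sqrt (4 - x))⁻¹ := by
      field_simp
    linarith

theorem arcsine_potential_at_neg_one :
    ∫ x in (0:ℝ)..4, Real.log (1 + x) / (π * Real.sqrt (x * (4 - x)))
      = 2 * Real.log ((1 + Real.sqrt 5) / 2) := by
  have hπ := Real.pi_pos
  -- substitution x = 2 - 2 cos θ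
  have hsub : (∫ θ in (0:ℝ)..π, (2 * Real.sin θ) • g4 (2 - 2 * Real.cos θ))
      = ∫ x in (0:ℝ)..4, g4 x := by
    have h := intervalIntegral.integral_comp_smul_deriv''' (a := 0) (b := π)
      (f := fun θ ↦ 2 - 2 * Real.cos θ) (f' := fun θ ↦ 2 * Real.sin θ) (g := g4)
      (by fun_prop) ?_ ?_ ?_ ?_
    · norm_num [Real.cos_zero, Real.cos_pi, Function.comp_apply] at h
      exact h
    · intro x _
      have : HasDerivAt (fun θ ↦ 2 - 2 * Real.cos θ) (2 * Real.sin x) x := by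
        simpa using ((Real.hasDerivAt_cos x).const_mul (2:ℝ)).const_sub 2
      exact this.hasDerivWithinAt
    · -- continuity of g4 on image of Ioo
      have himg : (fun θ ↦ 2 - 2 * Real.cos θ) '' Set.Ioo (min 0 π) (max 0 π)
          ⊆ Set.Ioo 0 4 := by
        rw [min_eq_left hπ.le, max_eq_right hπ.le]
        rintro x ⟨θ, hθ, rfl⟩
        have h1 : Real.cos θ < 1 := by
          have := Real.cos_lt_cos_of_nonneg_of_le_pi le_rfl hθ.2.le hθ.1
          simpa using this
        have h2 : -1 < Real.cos θ := by
          have := Real.cos_lt_cos_of_nonneg_of_le_pi hθ.1.le le_rfl hθ.2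
          simpa using this
        simp only [Set.mem_Ioo]
        constructor <;> nlinarith
      refine ContinuousOn.mono ?_ himg
      intro x hx
      have h1 : (0:ℝ) < 1 + x := by linarith [hx.1]
      have h2 : (0:ℝ) < x * (4 - x) := by nlinarith [hx.1, hx.2]
      apply ContinuousAt.continuousWithinAt
      unfold g4
      exact ((Real.continuousAt_log h1.ne').comp (by fun_prop)).div (by fun_prop)
        (by positivity)
    · -- integrability on image of uIcc
      refine g4_integrable.mono_set ?_
      rintro x ⟨θ, _, rfl⟩
      have h1 := Real.cos_le_one θ
      have h2 := Real.neg_one_le_cos θ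
      simp only [Set.mem_Icc]
      constructor <;> nlinarith
    · -- integrability of the substituted integrand
      have hcont : Continuous (fun θ : ℝ ↦ Real.log (3 - 2 * Real.cos θ) / π) := by
        refine Continuous.div_const ?_ π
        rw [continuous_iff_continuousAt]
        intro θ
        have : (0:ℝ) < 3 - 2 * Real.cos θ := by nlinarith [Real.cos_le_one θ]
        exact ContinuousAt.comp (g := Real.log) (f := fun θ : ℝ ↦ 3 - 2 * Real.cos θ)
          (Real.continuousAt_log this.ne') (by fun_prop)
      refine (hcont.integrableOn_uIcc).congr ?_
      have hae : ∀ᵐ θ : ℝ ∂(volume.restrict (Set.uIcc 0 π)), θ ≠ π := by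
        refine ae_restrict_of_ae ?_
        refine ae_iff.mpr ?_
        simp [Real.volume_singleton]
      filter_upwards [hae, ae_restrict_mem measurableSet_uIcc] with θ hθπ hθ
      rw [Set.uIcc_of_le hπ.le] at hθ
      have hθ0 : 0 ≤ θ := hθ.1
      have hθπ' : θ < π := lt_of_le_of_ne hθ.2 hθπ
      rcases eq_or_lt_of_le hθ0 with rfl | hθpos
      · norm_num [Real.cos_zero, Real.sin_zero, g4]
      · have hsin : 0 < Real.sin θ := Real.sin_pos_of_pos_of_lt_pi hθpos hθπ'
        have hcos1 : Real.cos θ < 1 := by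
          have := Real.cos_lt_cos_of_nonneg_of_le_pi le_rfl hθπ'.le hθpos
          simpa using this
        have hsq : (2 - 2 * Real.cos θ) * (4 - (2 - 2 * Real.cos θ))
            = (2 * Real.sin θ) ^ 2 := by
          nlinarith [Real.sin_sq_add_cos_sq θ]
        unfold g4
        simp only [Function.comp_apply, smul_eq_mul]
        rw [hsq, Real.sqrt_sq (by positivity)]
        have h32 : 3 - 2 * Real.cos θ = 1 + (2 - 2 * Real.cos θ) := by ring
        rw [← h32]
        field_simp
  -- replace integrand by log(3 - 2 cos θ)/π a.e.
  have hcongr : (∫ θ in (0:ℝ)..π, (2 * Real.sin θ) • g4 (2 - 2 * Real.cos θ))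
      = ∫ θ in (0:ℝ)..π, Real.log (3 - 2 * Real.cos θ) / π := by
    refine intervalIntegral.integral_congr_ae ?_
    have hae : ∀ᵐ θ : ℝ, θ ≠ π := by
      refine ae_iff.mpr ?_
      simp [Real.volume_singleton]
    filter_upwards [hae] with θ hθπ hθ
    rw [Set.uIoc_of_le hπ.le] at hθ
    have hθpos : 0 < θ := hθ.1
    have hθπ' : θ < π := lt_of_le_of_ne hθ.2 hθπ
    have hsin : 0 < Real.sin θ := Real.sin_pos_of_pos_of_lt_pi hθpos hθπ'
    have hcos1 : Real.cos θ < 1 := by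
      have := Real.cos_lt_cos_of_nonneg_of_le_pi le_rfl hθπ'.le hθpos
      simpa using this
    have hsq : (2 - 2 * Real.cos θ) * (4 - (2 - 2 * Real.cos θ))
        = (2 * Real.sin θ) ^ 2 := by
      nlinarith [Real.sin_sq_add_cos_sq θ]
    unfold g4
    simp only [smul_eq_mul]
    rw [hsq, Real.sqrt_sq (by positivity)]
    have h32 : 3 - 2 * Real.cos θ = 1 + (2 - 2 * Real.cos θ) := by ring
    rw [← h32]
    field_simp
  -- evaluate ∫_0^π log(3 - 2 cos θ) dθ
  have hs5 : Real.sqrt 5 ^ 2 = 5 := Real.sq_sqrt (by norm_num)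
  have hs5n : (0:ℝ) ≤ Real.sqrt 5 := Real.sqrt_nonneg 5
  have hs5lb : 2 < Real.sqrt 5 := by nlinarith
  have hs5ub : Real.sqrt 5 < 3 := by nlinarith
  set s := Real.sqrt 5 with hsdef
  set φ : ℝ := (1 + s) / 2 with hφ
  set r : ℝ := (3 - s) / 2 with hr
  have hφpos : 0 < φ := by rw [hφ]; linarith
  have hr0 : 0 ≤ r := by rw [hr]; linarith
  have hr1 : r < 1 := by rw [hr]; linarith
  have hid : ∀ θ : ℝ, Real.log (3 - 2 * Real.cos θ)
      = Real.log (φ ^ 2) + Real.log (1 - 2 * r * Real.cos θ + r ^ 2) := by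
    intro θ
    have hX : 0 < 1 - 2 * r * Real.cos θ + r ^ 2 := by
      nlinarith [Real.cos_le_one θ]
    have hprod : 3 - 2 * Real.cos θ = φ ^ 2 * (1 - 2 * r * Real.cos θ + r ^ 2) := by
      rw [hφ, hr]
      linear_combination (Real.cos θ * (1 - s) / 4 + (-s ^ 2 + 4 * s - 7) / 16) * hs5
    rw [hprod, Real.log_mul (by positivity) hX.ne']
  have hint2 : IntervalIntegrable (fun θ : ℝ ↦ Real.log (1 - 2 * r * Real.cos θ + r ^ 2))
      volume 0 π := by
    refine Continuous.intervalIntegrable ?_ 0 π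
    rw [continuous_iff_continuousAt]
    intro θ
    have hX : 0 < 1 - 2 * r * Real.cos θ + r ^ 2 := by nlinarith [Real.cos_le_one θ]
    exact ContinuousAt.comp (g := Real.log)
      (f := fun θ : ℝ ↦ 1 - 2 * r * Real.cos θ + r ^ 2)
      (Real.continuousAt_log hX.ne') (by fun_prop)
  have hval : (∫ θ in (0:ℝ)..π, Real.log (3 - 2 * Real.cos θ)) = π * (2 * Real.log φ) := by
    simp_rw [hid]
    rw [intervalIntegral.integral_add (intervalIntegrable_const) hint2,
      integral_log_poisson hr0 hr1, intervalIntegral.integral_const, Real.log_pow]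
    push_cast
    simp
  have hfinal : (∫ θ in (0:ℝ)..π, Real.log (3 - 2 * Real.cos θ) / π) = 2 * Real.log φ := by
    rw [intervalIntegral.integral_div, hval]
    field_simp
  show (∫ x in (0:ℝ)..4, g4 x) = 2 * Real.log φ
  rw [← hsub, hcongr, hfinal]
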